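/- Let S be a nonempty additive commutative semigroup, G a group, and f, f' : S → G polynomial maps. If the subgroup of G generated by f(S) ∪ f'(S) is nilpotent, then the elementwise commutator [f, f'] : S → G, t ↦ f(t)·f'(t)·f(t)⁻¹·f'(t)⁻¹, is a polynomial map. -/

import Mathlib

namespace PaperPoly

/-- `DegLE d f` means that `f : S → G` is a polynomial map of degree at most `d ∈ ℕ`:
the base case `DegLE 0 f` means `f` is constant, and `DegLE (d+1) f` means that for every
`s : S` both difference maps `L_s f : t ↦ f (s+t) * (f t)⁻¹` and
`R_s f : t ↦ (f t)⁻¹ * f (s+t)` satisfy `DegLE d`. -/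
def DegLE {S : Type*} [AddCommSemigroup S] {G : Type*} [Group G] : ℕ → (S → G) → Prop
  | 0 => fun f => ∀ t t' : S, f t = f t'
  | d + 1 => fun f => ∀ s : S,
      DegLE d (fun t => f (s + t) * (f t)⁻¹) ∧ DegLE d (fun t => (f t)⁻¹ * f (s + t))

/-- `f` is a polynomial map (of some finite degree). -/
def IsPoly {S : Type*} [AddCommSemigroup S] {G : Type*} [Group G] (f : S → G) : Prop :=
  ∃ d : ℕ, DegLE d f

section Lcs
variable {G : Type*} [Group G]

/-- Three subgroups lemma relative to a normal subgroup. -/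
theorem three_subgroups {H₁ H₂ H₃ L : Subgroup G} [L.Normal]
    (h1 : ⁅⁅H₂, H₃⁆, H₁⁆ ≤ L) (h2 : ⁅⁅H₃, H₁⁆, H₂⁆ ≤ L) : ⁅⁅H₁, H₂⁆, H₃⁆ ≤ L := by
  set φ := QuotientGroup.mk' L with hφ
  have key : ∀ {K : Subgroup G}, K ≤ L ↔ Subgroup.map φ K = ⊥ := by
    intro K
    rw [Subgroup.map_eq_bot_iff, QuotientGroup.ker_mk']
  rw [key] at h1 h2 ⊢
  rw [Subgroup.map_commutator, Subgroup.map_commutator] at h1 h2 ⊢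
  exact Subgroup.commutator_commutator_eq_bot_of_rotate h1 h2

theorem lcs_succ' (n : ℕ) :
    Subgroup.lowerCentralSeries (⊤ : Subgroup G) (n + 1) = ⁅Subgroup.lowerCentralSeries (⊤ : Subgroup G) n, (⊤ : Subgroup G)⁆ := rfl

theorem lcs_commutator_le :
    ∀ n m : ℕ, ⁅Subgroup.lowerCentralSeries (⊤ : Subgroup G) m, Subgroup.lowerCentralSeries (⊤ : Subgroup G) n⁆ ≤ Subgroup.lowerCentralSeries (⊤ : Subgroup G) (m + n + 1) := by
  intro n
  induction n with
  | zero =>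
      intro m
      rw [lowerCentralSeries_zero]
      show ⁅Subgroup.lowerCentralSeries (⊤ : Subgroup G) m, (⊤ : Subgroup G)⁆ ≤ Subgroup.lowerCentralSeries (⊤ : Subgroup G) (m + 1)
      exact le_of_eq (lcs_succ' m).symm
  | succ n ih =>
      intro m
      have hrw : Subgroup.lowerCentralSeries (⊤ : Subgroup G) (n + 1) = ⁅Subgroup.lowerCentralSeries (⊤ : Subgroup G) n, (⊤ : Subgroup G)⁆ :=
        lcs_succ' n
      rw [hrw]
      refine le_trans (Subgroup.commutator_comm_le _ _) ?_
      have h1 : ⁅⁅(⊤ : Subgroup G), Subgroup.lowerCentralSeries (⊤ : Subgroup G) m⁆, Subgroup.lowerCentralSeries (⊤ : Subgroup G) n⁆ ≤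
          Subgroup.lowerCentralSeries (⊤ : Subgroup G) (m + (n + 1) + 1) := by
        rw [Subgroup.commutator_comm (⊤ : Subgroup G), ← lcs_succ']
        have := ih (m + 1)
        have he : m + 1 + n + 1 = m + (n + 1) + 1 := by omega
        rwa [he] at this
      have h2 : ⁅⁅Subgroup.lowerCentralSeries (⊤ : Subgroup G) m, Subgroup.lowerCentralSeries (⊤ : Subgroup G) n⁆, (⊤ : Subgroup G)⁆ ≤
          Subgroup.lowerCentralSeries (⊤ : Subgroup G) (m + (n + 1) + 1) := by
        calc ⁅⁅Subgroup.lowerCentralSeries (⊤ : Subgroup G) m, Subgroup.lowerCentralSeries (⊤ : Subgroup G) n⁆, (⊤ : Subgroup G)⁆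
            ≤ ⁅Subgroup.lowerCentralSeries (⊤ : Subgroup G) (m + n + 1), (⊤ : Subgroup G)⁆ :=
              Subgroup.commutator_mono (ih m) le_rfl
          _ = Subgroup.lowerCentralSeries (⊤ : Subgroup G) (m + n + 2) := (lcs_succ' (m+n+1)).symm
          _ ≤ Subgroup.lowerCentralSeries (⊤ : Subgroup G) (m + (n + 1) + 1) := by
              apply lowerCentralSeries_antitone; omega
      exact three_subgroups h1 h2

end Lcs

section Core
variable {S : Type*} [AddCommSemigroup S] {G : Type*} [Group G]

/-- Truncated Host–Kra/Leibman polynomiality: all iterated (left/right) difference maps of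
order `k ≤ m` take values in `F k`. -/
def HKT : ℕ → (ℕ → Subgroup G) → (S → G) → Prop
  | 0, F, f => ∀ t, f t ∈ F 0
  | m + 1, F, f => (∀ t, f t ∈ F 0) ∧ ∀ a : S,
      HKT m (fun k => F (k + 1)) (fun t => f (a + t) * (f t)⁻¹) ∧
      HKT m (fun k => F (k + 1)) (fun t => (f t)⁻¹ * f (a + t))

/-- Shifted filtration. -/
def shF (c : ℕ) (F : ℕ → Subgroup G) : ℕ → Subgroup G := fun k => F (k + c)

/-- `F` is antitone. -/
def Anti (F : ℕ → Subgroup G) : Prop := ∀ i j : ℕ, i ≤ j → F j ≤ F i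

/-- `F` has the commutator property of a filtration. -/
def CommC (F : ℕ → Subgroup G) : Prop := ∀ i j : ℕ, ⁅F i, F j⁆ ≤ F (i + j)

theorem Anti.shF {F : ℕ → Subgroup G} (h : Anti F) (c : ℕ) : Anti (shF c F) :=
  fun i j hij => h _ _ (by omega)

theorem CommC.shF {F : ℕ → Subgroup G} (hA : Anti F) (h : CommC F) (c : ℕ) :
    CommC (shF c F) := by
  intro i j
  refine le_trans (h (i + c) (j + c)) (hA _ _ ?_)
  omega

theorem HKT_ext {m : ℕ} {F : ℕ → Subgroup G} {f g : S → G} (h : ∀ t, f t = g t)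
    (hf : HKT m F f) : HKT m F g := by
  have : f = g := funext h
  rwa [this] at hf

theorem HKT_mono : ∀ {m : ℕ} {F F' : ℕ → Subgroup G} {f : S → G},
    (∀ k, F k ≤ F' k) → HKT m F f → HKT m F' f := by
  intro m
  induction m with
  | zero => exact fun h hf t => h 0 (hf t)
  | succ m ih =>
      intro F F' f h hf
      exact ⟨fun t => h 0 (hf.1 t),
        fun a => ⟨ih (fun k => h (k + 1)) (hf.2 a).1, ih (fun k => h (k + 1)) (hf.2 a).2⟩⟩

theorem HKT_shF_le {m a b : ℕ} {F : ℕ → Subgroup G} {f : S → G} (hA : Anti F) (h : b ≤ a)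
    (hf : HKT m (shF a F) f) : HKT m (shF b F) f :=
  HKT_mono (fun k => hA _ _ (by omega)) hf

theorem HKT_one : ∀ (m : ℕ) (F : ℕ → Subgroup G), HKT m F (fun _ : S => (1 : G)) := by
  intro m
  induction m with
  | zero => exact fun F t => one_mem _
  | succ m ih =>
      intro F
      refine ⟨fun t => one_mem _, fun a => ⟨?_, ?_⟩⟩ <;>
        exact HKT_ext (fun t => by group) (ih _)

theorem HKT_restrict : ∀ {m : ℕ} {F : ℕ → Subgroup G} {f : S → G},
    HKT (m + 1) F f → HKT m F f := by
  intro m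
  induction m with
  | zero => exact fun hf => hf.1
  | succ m ih =>
      intro F f hf
      exact ⟨hf.1, fun a => ⟨ih (hf.2 a).1, ih (hf.2 a).2⟩⟩

theorem shF_succ (c : ℕ) (F : ℕ → Subgroup G) :
    (fun k => shF c F (k + 1)) = shF (c + 1) F := by
  funext k
  show F (k + 1 + c) = F (k + (c + 1))
  exact congrArg F (by omega)

theorem shF_zero (F : ℕ → Subgroup G) : shF 0 F = F := rfl

/-- The Lazard–Leibman package: `HKT m F` is closed under products and inverses, and
pointwise commutators gain filtration weight. -/
theorem pkg : ∀ m : ℕ,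
    (∀ (F : ℕ → Subgroup G), Anti F → CommC F → ∀ f g : S → G,
      HKT m F f → HKT m F g → HKT m F (fun t => f t * g t)) ∧
    (∀ (F : ℕ → Subgroup G), Anti F → CommC F → ∀ f : S → G,
      HKT m F f → HKT m F (fun t => (f t)⁻¹)) ∧
    (∀ (F : ℕ → Subgroup G), Anti F → CommC F → ∀ (i j : ℕ) (f g : S → G),
      HKT m (shF i F) f → HKT m (shF j F) g →
      HKT m (shF (i + j) F) (fun t => f t * g t * (f t)⁻¹ * (g t)⁻¹)) := by
  intro m
  induction m with
  | zero =>
      refine ⟨fun F hA hC f g hf hg t => mul_mem (hf t) (hg t),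
        fun F hA hC f hf t => inv_mem (hf t), fun F hA hC i j f g hf hg t => ?_⟩
      have h1 : f t * g t * (f t)⁻¹ * (g t)⁻¹ ∈ ⁅F (0 + i), F (0 + j)⁆ :=
        Subgroup.commutator_mem_commutator (hf t) (hg t)
      have h2 := hC (0 + i) (0 + j) h1
      exact hA _ _ (by omega) h2
  | succ m ih =>
      obtain ⟨MUL, INV, COMM⟩ := ih
      -- conjugation closure at level m
      have CONJ : ∀ (F : ℕ → Subgroup G), Anti F → CommC F → ∀ (e c : ℕ) (p h : S → G),
          HKT m (shF e F) p → HKT m (shF c F) h →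
          HKT m (shF c F) (fun t => p t * h t * (p t)⁻¹) := by
        intro F hA hC e c p h hp hh
        have hcomm := COMM F hA hC e c p h hp hh
        have hcomm' : HKT m (shF c F) (fun t => p t * h t * (p t)⁻¹ * (h t)⁻¹) :=
          HKT_shF_le hA (by omega) hcomm
        have := MUL (shF c F) (hA.shF c) (hC.shF hA c) _ _ hcomm' hh
        exact HKT_ext (fun t => by group) this
      refine ⟨?_, ?_, ?_⟩
      · -- MUL
        intro F hA hC f g hf hg
        refine ⟨fun t => mul_mem (hf.1 t) (hg.1 t), fun a => ⟨?_, ?_⟩⟩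
        · -- left difference
          show HKT m (shF 1 F) _
          have hu : HKT m (shF 1 F) (fun t => f (a + t) * (f t)⁻¹) := (hf.2 a).1
          have hv : HKT m (shF 1 F) (fun t => g (a + t) * (g t)⁻¹) := (hg.2 a).1
          have hf0 : HKT m (shF 0 F) f := HKT_restrict hf
          have hfv := COMM F hA hC 0 1 f _ hf0 hv
          have h1 := MUL (shF 1 F) (hA.shF 1) (hC.shF hA 1) _ _ hu
            (HKT_shF_le hA (by omega) hfv)
          have h2 := MUL (shF 1 F) (hA.shF 1) (hC.shF hA 1) _ _ h1 hv
          exact HKT_ext (fun t => by group) h2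
        · -- right difference
          show HKT m (shF 1 F) _
          have hu : HKT m (shF 1 F) (fun t => (f t)⁻¹ * f (a + t)) := (hf.2 a).2
          have hv : HKT m (shF 1 F) (fun t => (g t)⁻¹ * g (a + t)) := (hg.2 a).2
          have hginv : HKT m (shF 0 F) (fun t => (g t)⁻¹) :=
            INV F hA hC g (HKT_restrict hg)
          have h1 := CONJ F hA hC 0 1 _ _ hginv hu
          have h2 := MUL (shF 1 F) (hA.shF 1) (hC.shF hA 1) _ _ h1 hv
          exact HKT_ext (fun t => by group) h2
      · -- INV
        intro F hA hC f hf
        refine ⟨fun t => inv_mem (hf.1 t), fun a => ⟨?_, ?_⟩⟩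
        · show HKT m (shF 1 F) _
          have := INV (shF 1 F) (hA.shF 1) (hC.shF hA 1) _ (hf.2 a).2
          exact HKT_ext (fun t => by group) this
        · show HKT m (shF 1 F) _
          have := INV (shF 1 F) (hA.shF 1) (hC.shF hA 1) _ (hf.2 a).1
          exact HKT_ext (fun t => by group) this
      · -- COMM
        intro F hA hC i j f g hf hg
        have hfm : HKT m (shF i F) f := HKT_restrict hf
        have hgm : HKT m (shF j F) g := HKT_restrict hg
        have hw := COMM F hA hC i j f g hfm hgm
        refine ⟨?_, fun a => ?_⟩
        · intro t
          have h1 : f t * g t * (f t)⁻¹ * (g t)⁻¹ ∈ ⁅F (0 + i), F (0 + j)⁆ :=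
            Subgroup.commutator_mem_commutator (hf.1 t) (hg.1 t)
          exact hA _ _ (by omega) (hC (0 + i) (0 + j) h1)
        have hu := (hf.2 a).1
        rw [shF_succ] at hu
        have hv := (hg.2 a).1
        rw [shF_succ] at hv
        -- the five building blocks, all in `shF (i+j+1) F`
        set T := shF (i + j + 1) F with hT
        have hAT : Anti T := hA.shF _
        have hCT : CommC T := hC.shF hA _
        have hfv : HKT m T (fun t => f t * (g (a + t) * (g t)⁻¹) * (f t)⁻¹ *
            (g (a + t) * (g t)⁻¹)⁻¹) :=
          HKT_shF_le hA (by omega) (COMM F hA hC i (j + 1) f _ hfm hv)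
        have hA1 := CONJ F hA hC (i + 1) (i + j + 1) _ _ hu hfv
        have hA2 : HKT m T (fun t => (f (a + t) * (f t)⁻¹) * (g (a + t) * (g t)⁻¹) *
            (f (a + t) * (f t)⁻¹)⁻¹ * (g (a + t) * (g t)⁻¹)⁻¹) :=
          HKT_shF_le hA (by omega) (COMM F hA hC (i + 1) (j + 1) _ _ hu hv)
        have hp : HKT m (shF 1 F) (fun t => (g (a + t) * (g t)⁻¹) * (f (a + t) * (f t)⁻¹)) :=
          MUL (shF 1 F) (hA.shF 1) (hC.shF hA 1) _ _
            (HKT_shF_le hA (by omega) hv) (HKT_shF_le hA (by omega) hu)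
        have hA3 : HKT m T (fun t => ((g (a + t) * (g t)⁻¹) * (f (a + t) * (f t)⁻¹)) *
            (f t * g t * (f t)⁻¹ * (g t)⁻¹) *
            ((g (a + t) * (g t)⁻¹) * (f (a + t) * (f t)⁻¹))⁻¹ *
            (f t * g t * (f t)⁻¹ * (g t)⁻¹)⁻¹) :=
          HKT_shF_le hA (by omega) (COMM F hA hC 1 (i + j) _ _ hp hw)
        have hug : HKT m T (fun t => (f (a + t) * (f t)⁻¹) * g t *
            (f (a + t) * (f t)⁻¹)⁻¹ * (g t)⁻¹) :=
          HKT_shF_le hA (by omega) (COMM F hA hC (i + 1) j _ _ hu hgm)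
        have hZ := CONJ F hA hC (j + 1) (i + j + 1) _ _ hv hug
        have hA4 := CONJ F hA hC (i + j) (i + j + 1) _ _ hw hZ
        have hwinv : HKT m (shF (i + j) F) (fun t => (f t * g t * (f t)⁻¹ * (g t)⁻¹)⁻¹) :=
          INV (shF (i + j) F) (hA.shF _) (hC.shF hA _) _ hw
        constructor
        · -- left difference of the commutator map
          rw [shF_succ]
          have h12 := MUL T hAT hCT _ _ hA1 hA2
          have h123 := MUL T hAT hCT _ _ h12 hA3
          have h1234 := MUL T hAT hCT _ _ h123 hA4
          refine HKT_ext (fun t => ?_) h1234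
          show _ = (f (a + t) * g (a + t) * (f (a + t))⁻¹ * (g (a + t))⁻¹) *
            (f t * g t * (f t)⁻¹ * (g t)⁻¹)⁻¹
          group
        · -- right difference of the commutator map
          rw [shF_succ]
          have hB1 := CONJ F hA hC (i + j) (i + j + 1) _ _ hwinv hA1
          have hB2 := CONJ F hA hC (i + j) (i + j + 1) _ _ hwinv hA2
          have hB3 : HKT m T (fun t => (f t * g t * (f t)⁻¹ * (g t)⁻¹)⁻¹ *
              ((g (a + t) * (g t)⁻¹) * (f (a + t) * (f t)⁻¹)) *
              ((f t * g t * (f t)⁻¹ * (g t)⁻¹)⁻¹)⁻¹ *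
              ((g (a + t) * (g t)⁻¹) * (f (a + t) * (f t)⁻¹))⁻¹) :=
            HKT_shF_le hA (by omega) (COMM F hA hC (i + j) 1 _ _ hwinv hp)
          have h12 := MUL T hAT hCT _ _ hB1 hB2
          have h123 := MUL T hAT hCT _ _ h12 hB3
          have h1234 := MUL T hAT hCT _ _ h123 hZ
          refine HKT_ext (fun t => ?_) h1234
          show _ = (f t * g t * (f t)⁻¹ * (g t)⁻¹)⁻¹ *
            (f (a + t) * g (a + t) * (f (a + t))⁻¹ * (g (a + t))⁻¹)
          group

end Core

section Glue
variable {S : Type*} [AddCommSemigroup S] {G : Type*} [Group G]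

theorem DegLE_ext {d : ℕ} {f g : S → G} (h : ∀ t, f t = g t) (hf : DegLE d f) : DegLE d g := by
  have : f = g := funext h
  rwa [this] at hf

theorem DegLE_succ : ∀ {d : ℕ} {f : S → G}, DegLE d f → DegLE (d + 1) f := by
  intro d
  induction d with
  | zero =>
      intro f h s
      constructor
      · intro t t'
        show f (s + t) * (f t)⁻¹ = f (s + t') * (f t')⁻¹
        rw [h (s + t) t, h (s + t') t', h t t']
      · intro t t'
        show (f t)⁻¹ * f (s + t) = (f t')⁻¹ * f (s + t')
        rw [h (s + t) t, h (s + t') t', h t t']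
  | succ d ih =>
      intro f hf s
      exact ⟨ih (hf s).1, ih (hf s).2⟩

theorem DegLE_add {d : ℕ} {f : S → G} : ∀ k, DegLE d f → DegLE (d + k) f := by
  intro k
  induction k with
  | zero => exact fun h => h
  | succ k ih => exact fun h => DegLE_succ (ih h)

theorem DegLE_mono {d d' : ℕ} {f : S → G} (hdd : d ≤ d') (h : DegLE d f) : DegLE d' f := by
  obtain ⟨k, rfl⟩ := Nat.exists_eq_add_of_le hdd
  exact DegLE_add k h

theorem DegLE_comp {G' : Type*} [Group G'] (φ : G →* G') :
    ∀ {d : ℕ} {f : S → G}, DegLE d f → DegLE d (fun t => φ (f t)) := by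
  intro d
  induction d with
  | zero => exact fun h t t' => congrArg φ (h t t')
  | succ d ih =>
      intro f hf s
      refine ⟨DegLE_ext (fun t => ?_) (ih (hf s).1), DegLE_ext (fun t => ?_) (ih (hf s).2)⟩ <;>
        simp
theorem DegLE_of_comp_inj {G' : Type*} [Group G'] (φ : G' →* G) (hφ : Function.Injective φ) :
    ∀ {d : ℕ} {h : S → G'}, DegLE d (fun t => φ (h t)) → DegLE d h := by
  intro d
  induction d with
  | zero => exact fun H t t' => hφ (H t t')
  | succ d ih =>
      intro h H s
      refine ⟨ih (DegLE_ext (fun t => ?_) ((H s).1)), ih (DegLE_ext (fun t => ?_) ((H s).2))⟩ <;>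
        simp

theorem HKT_of_degLE {d : ℕ} (F : ℕ → Subgroup G) (htop : ∀ k, k ≤ d → F k = ⊤) :
    ∀ (m : ℕ) {r c : ℕ} {h : S → G}, DegLE r h → r + c ≤ d → HKT m (shF c F) h := by
  intro m
  induction m with
  | zero =>
      intro r c h _ hrc t
      show h t ∈ F (0 + c)
      rw [htop _ (by omega)]
      exact Subgroup.mem_top _
  | succ m ih =>
      intro r c h hdeg hrc
      refine ⟨fun t => ?_, fun a => ⟨?_, ?_⟩⟩
      · show h t ∈ F (0 + c)
        rw [htop _ (by omega)]
        exact Subgroup.mem_top _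
      · show HKT m (fun k => shF c F (k + 1)) _
        rw [shF_succ]
        cases r with
        | zero =>
            exact HKT_ext (fun t => by rw [hdeg (a + t) t]; group) (HKT_one m _)
        | succ r => exact ih ((hdeg a).1) (by omega)
      · show HKT m (fun k => shF c F (k + 1)) _
        rw [shF_succ]
        cases r with
        | zero =>
            exact HKT_ext (fun t => by rw [hdeg (a + t) t]; group) (HKT_one m _)
        | succ r => exact ih ((hdeg a).2) (by omega)

theorem degLE_of_HKT : ∀ (m : ℕ) (F : ℕ → Subgroup G) (h : S → G),
    F m = ⊥ → HKT m F h → DegLE m h := by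
  intro m
  induction m with
  | zero =>
      intro F h hbot hH t t'
      have h1 := hH t
      have h2 := hH t'
      rw [hbot, Subgroup.mem_bot] at h1 h2
      rw [h1, h2]
  | succ m ih =>
      intro F h hbot hH s
      exact ⟨ih _ _ hbot (hH.2 s).1, ih _ _ hbot (hH.2 s).2⟩

end Glue

/-- If `f, f' : S → G` are polynomial maps from a nonempty additive commutative semigroup
`S` to a group `G`, and the subgroup of `G` generated by `f(S) ∪ f'(S)` is nilpotent,
then the elementwise commutator `t ↦ f t * f' t * (f t)⁻¹ * (f' t)⁻¹` is a polynomial map. -/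
theorem commutator_of_polynomial_maps {S : Type*} [AddCommSemigroup S] [Nonempty S]
    {G : Type*} [Group G] (f f' : S → G) (hf : IsPoly f) (hf' : IsPoly f')
    (hnil : Group.IsNilpotent ↥(Subgroup.closure (Set.range f ∪ Set.range f'))) :
    IsPoly (fun t => f t * f' t * (f t)⁻¹ * (f' t)⁻¹) := by
  obtain ⟨d1, h1⟩ := hf
  obtain ⟨d2, h2⟩ := hf'
  set H := Subgroup.closure (Set.range f ∪ Set.range f') with hH
  set d := max (max d1 d2) 1 with hd
  have hd1 : 1 ≤ d := le_max_right _ _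
  have hdf : DegLE d f := DegLE_mono (le_trans (le_max_left d1 d2) (le_max_left _ 1)) h1
  have hdf' : DegLE d f' := DegLE_mono (le_trans (le_max_right d1 d2) (le_max_left _ 1)) h2
  have hmemf : ∀ t, f t ∈ H := fun t => Subgroup.subset_closure (Or.inl ⟨t, rfl⟩)
  have hmemf' : ∀ t, f' t ∈ H := fun t => Subgroup.subset_closure (Or.inr ⟨t, rfl⟩)
  set F₁ : S → ↥H := fun t => ⟨f t, hmemf t⟩ with hF₁
  set F₂ : S → ↥H := fun t => ⟨f' t, hmemf' t⟩ with hF₂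
  have hdF₁ : DegLE d F₁ :=
    DegLE_of_comp_inj H.subtype (Subgroup.subtype_injective H)
      (DegLE_ext (fun t => rfl) hdf)
  have hdF₂ : DegLE d F₂ :=
    DegLE_of_comp_inj H.subtype (Subgroup.subtype_injective H)
      (DegLE_ext (fun t => rfl) hdf')
  obtain ⟨n, hn⟩ := nilpotent_iff_lowerCentralSeries.mp hnil
  set FF : ℕ → Subgroup ↥H := fun k => Subgroup.lowerCentralSeries (⊤ : Subgroup ↥H) ((k - 1) / d) with hFF
  have htop : ∀ k, k ≤ d → FF k = ⊤ := by
    intro k hk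
    have : (k - 1) / d = 0 := Nat.div_eq_of_lt (by omega)
    rw [hFF]
    simp only [this]
    exact lowerCentralSeries_zero _
  have hA : Anti FF := fun i j hij =>
    lowerCentralSeries_antitone _ (Nat.div_le_div_right (by omega))
  have hC : CommC FF := by
    intro i j
    refine le_trans (lcs_commutator_le _ _) (lowerCentralSeries_antitone _ ?_)
    have hd0 : 0 < d := by omega
    have hlt1 : i - 1 < ((i - 1) / d + 1) * d :=
      (Nat.div_lt_iff_lt_mul hd0).mp (Nat.lt_succ_self _)
    have hlt2 : j - 1 < ((j - 1) / d + 1) * d :=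
      (Nat.div_lt_iff_lt_mul hd0).mp (Nat.lt_succ_self _)
    have e0 : i + j - 1 ≤ (i - 1) + (j - 1) + 1 := by omega
    have h2 : i + j - 1 < ((i - 1) / d + 1) * d + ((j - 1) / d + 1) * d := by linarith
    have h3 : ((i - 1) / d + 1) * d + ((j - 1) / d + 1) * d
        = ((i - 1) / d + (j - 1) / d + 1 + 1) * d := by ring
    exact Nat.lt_succ_iff.mp ((Nat.div_lt_iff_lt_mul hd0).mpr (h3 ▸ h2))
  set N := n * d + 1 with hN
  have hbot : FF N = ⊥ := by
    show Subgroup.lowerCentralSeries (⊤ : Subgroup ↥H) ((N - 1) / d) = ⊥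
    have e : (N - 1) / d = n := by
      have e1 : N - 1 = n * d := by omega
      rw [e1, Nat.mul_div_cancel _ (by omega)]
    rw [e, hn]
  have hHK₁ : HKT N (shF 0 FF) F₁ := HKT_of_degLE FF htop N hdF₁ (by omega)
  have hHK₂ : HKT N (shF 0 FF) F₂ := HKT_of_degLE FF htop N hdF₂ (by omega)
  have hcomm := (pkg N).2.2 FF hA hC 0 0 F₁ F₂ hHK₁ hHK₂
  have hdeg : DegLE N (fun t => F₁ t * F₂ t * (F₁ t)⁻¹ * (F₂ t)⁻¹) :=
    degLE_of_HKT N (shF 0 FF) _ hbot hcomm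
  refine ⟨N, DegLE_ext (fun t => rfl) (DegLE_comp H.subtype hdeg)⟩


end PaperPoly
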